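/- For λ, θ₁, θ₂, θ₃ ∈ [0,1] with θ₁, θ₂, θ₃ < 1: (1/4)(G(θ₁,θ₂,θ₃) + G(θ₁,-θ₂,θ₃) + G(θ₁,θ₂,-θ₃) + G(θ₁,-θ₂,-θ₃)) ≤ λ(θ₁·arctanh(θ₁) + θ₂·arctanh(θ₂) + θ₃·arctanh(θ₃)), where G(a,b,c) := (a+b+c+abc)·arctanh( λ(a+b+c+abc) / (1 + λ(ab+bc+ca)) ). -/

import Mathlib

noncomputable def arctanh (x : ℝ) : ℝ := (1/2) * Real.log ((1+x)/(1-x))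

noncomputable def G (l a b c : ℝ) : ℝ :=
  (a + b + c + a*b*c) * arctanh (l*(a + b + c + a*b*c) / (1 + l*(a*b + b*c + c*a)))

lemma aff_pos {l x : ℝ} (hl0 : 0 ≤ l) (hl1 : l ≤ 1) (hx : 0 < x) : 0 < 1 - l + l * x := by
  rcases eq_or_lt_of_le hl1 with h | h
  · rw [h]; linarith
  · nlinarith [mul_nonneg hl0 hx.le]

lemma amgm3 {u v w : ℝ} (hu : 0 ≤ u) (hv : 0 ≤ v) (hw : 0 ≤ w) :
    u * v * w ≤ ((u + v + w)/3)^3 := by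
  nlinarith [mul_nonneg hu (sq_nonneg (v-w)), mul_nonneg hv (sq_nonneg (w-u)),
    mul_nonneg hw (sq_nonneg (u-v)), sq_nonneg (u-v), sq_nonneg (v-w), sq_nonneg (w-u),
    mul_nonneg (add_nonneg (add_nonneg hu hv) hw) (sq_nonneg (u+v+w))]

lemma two_mul_le_log {x : ℝ} (h0 : 0 ≤ x) (h1 : x < 1) :
    2*x + (2/3)*x^3 ≤ Real.log (1+x) - Real.log (1-x) := by
  set f : ℝ → ℝ := fun t => Real.log (1+t) - Real.log (1-t) - 2*t - (2/3)*t^3 with hf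
  have key : ∀ t ∈ Set.Icc (0:ℝ) x, ∀ s ∈ Set.Icc (0:ℝ) x, t ≤ s → f t ≤ f s := by
    have hder : ∀ t ∈ Set.Icc (0:ℝ) x,
        HasDerivAt f ((1+t)⁻¹ + (1-t)⁻¹ - 2 - 2*t^2) t := by
      intro t ht
      obtain ⟨ht0, htx⟩ := ht
      have h1t : (0:ℝ) < 1 + t := by linarith
      have h2t : (0:ℝ) < 1 - t := by linarith
      have d1 : HasDerivAt (fun t : ℝ => Real.log (1+t)) ((1:ℝ)/(1+t)) t := by
        have : HasDerivAt (fun t : ℝ => 1 + t) 1 t := (hasDerivAt_id t).const_add 1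
        simpa using this.log h1t.ne'
      have d2 : HasDerivAt (fun t : ℝ => Real.log (1-t)) ((-1)/(1-t)) t := by
        have : HasDerivAt (fun t : ℝ => 1 - t) (-1) t := by
          simpa using (hasDerivAt_id t).const_sub 1
        simpa using this.log h2t.ne'
      have d3 : HasDerivAt (fun t : ℝ => 2*t) 2 t := by
        simpa using (hasDerivAt_id t).const_mul 2
      have d4 : HasDerivAt (fun t : ℝ => (2/3)*t^3) ((2/3)*(3*t^2)) t := by
        have := (hasDerivAt_pow 3 t).const_mul (2/3 : ℝ)
        simpa using this
      have := ((d1.sub d2).sub d3).sub d4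
      refine this.congr_deriv ?_
      field_simp
      ring
    have := monotoneOn_of_hasDerivWithinAt_nonneg (convex_Icc (0:ℝ) x)
      (fun t ht => (hder t ht).continuousAt.continuousWithinAt)
      (fun t ht => (hder t (interior_subset ht)).hasDerivWithinAt)
      ?_
    · exact fun t ht s hs hts => this ht hs hts
    · intro t ht
      rw [interior_Icc] at ht
      obtain ⟨ht0, htx⟩ := ht
      have h1t : (0:ℝ) < 1 + t := by linarith
      have h2t : (0:ℝ) < 1 - t := by linarith
      have e : (1+t)⁻¹ + (1-t)⁻¹ - 2 - 2*t^2 = 2*t^4/((1+t)*(1-t)) := by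
        field_simp; ring
      rw [e]; positivity
  have h0x : (0:ℝ) ∈ Set.Icc (0:ℝ) x := ⟨le_refl _, h0⟩
  have hxx : x ∈ Set.Icc (0:ℝ) x := ⟨h0, le_refl _⟩
  have := key 0 h0x x hxx h0
  simp only [hf] at this
  norm_num at this
  linarith

noncomputable def psi (l x : ℝ) : ℝ := Real.log (1 - l + l*x) - l * Real.log x

lemma psi_hasDeriv {l x : ℝ} (hl0 : 0 ≤ l) (hl1 : l ≤ 1) (hx : 0 < x) :
    HasDerivAt (psi l) (l/(1 - l + l*x) - l * x⁻¹) x := by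
  have hA : 0 < 1 - l + l*x := aff_pos hl0 hl1 hx
  have d1 : HasDerivAt (fun x : ℝ => Real.log (1 - l + l*x)) (l/(1 - l + l*x)) x := by
    have h : HasDerivAt (fun x : ℝ => 1 - l + l*x) l x := by
      simpa using ((hasDerivAt_id x).const_mul l).const_add (1-l)
    simpa using h.log hA.ne'
  have d2 : HasDerivAt (fun x : ℝ => l * Real.log x) (l * x⁻¹) x :=
    (Real.hasDerivAt_log hx.ne').const_mul l
  exact d1.sub d2

lemma psi_anti {l M P : ℝ} (hl0 : 0 ≤ l) (hl1 : l ≤ 1) (hM : 0 < M) (hMP : M ≤ P)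
    (hP1 : P ≤ 1) : psi l P ≤ psi l M := by
  have key := antitoneOn_of_hasDerivWithinAt_nonpos (convex_Icc M 1)
    (f := psi l) (f' := fun x => l/(1 - l + l*x) - l * x⁻¹)
    (fun x hx => (psi_hasDeriv hl0 hl1 (lt_of_lt_of_le hM hx.1)).continuousAt.continuousWithinAt)
    (fun x hx => (psi_hasDeriv hl0 hl1
      (lt_of_lt_of_le hM (interior_subset hx).1)).hasDerivWithinAt)
    ?_
  · exact key ⟨le_refl _, hMP.trans hP1⟩ ⟨hMP, hP1⟩ hMP
  · intro x hx
    rw [interior_Icc] at hx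
    obtain ⟨hxM, hx1⟩ := hx
    have hx0 : 0 < x := hM.trans hxM
    have hA : 0 < 1 - l + l*x := aff_pos hl0 hl1 hx0
    have hxA : x ≤ 1 - l + l*x := by nlinarith [mul_nonneg (sub_nonneg.2 hl1) (sub_nonneg.2 hx1.le)]
    have : l/(1 - l + l*x) ≤ l/x := by
      gcongr
    have hlx : l * x⁻¹ = l / x := by rw [div_eq_mul_inv]
    linarith [this]

lemma psi_mono {l P Q : ℝ} (hl0 : 0 ≤ l) (hl1 : l ≤ 1) (hP : 1 ≤ P) (hPQ : P ≤ Q) :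
    psi l P ≤ psi l Q := by
  have key := monotoneOn_of_hasDerivWithinAt_nonneg (convex_Icc 1 Q)
    (f := psi l) (f' := fun x => l/(1 - l + l*x) - l * x⁻¹)
    (fun x hx => (psi_hasDeriv hl0 hl1 (lt_of_lt_of_le one_pos hx.1)).continuousAt.continuousWithinAt)
    (fun x hx => (psi_hasDeriv hl0 hl1
      (lt_of_lt_of_le one_pos (interior_subset hx).1)).hasDerivWithinAt)
    ?_
  · exact key ⟨hP, hPQ⟩ ⟨hP.trans hPQ, le_refl _⟩ hPQ
  · intro x hx
    rw [interior_Icc] at hx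
    obtain ⟨hx1, hxQ⟩ := hx
    have hx0 : 0 < x := lt_trans one_pos hx1
    have hA : 0 < 1 - l + l*x := aff_pos hl0 hl1 hx0
    have hxA : 1 - l + l*x ≤ x := by nlinarith [mul_nonneg (sub_nonneg.2 hl1) (sub_nonneg.2 hx1.le)]
    have : l/x ≤ l/(1 - l + l*x) := by gcongr
    have hlx : l * x⁻¹ = l / x := by rw [div_eq_mul_inv]
    linarith [this]

lemma key2' {l P M : ℝ} (hl0 : 0 ≤ l) (hl1 : l ≤ 1) (hM0 : 0 < M) (hM1 : M < 1)
    (hP1 : 1 < P) (hPM2 : 2 < P + M) (hClb : P - M ≤ Real.log P - Real.log M) :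
    psi l P ≤ psi l M := by
  set C : ℝ := Real.log P - Real.log M with hCdef
  set g : ℝ → ℝ := fun t => t*C - Real.log (1 - t + t*P) + Real.log (1 - t + t*M) with hgdef
  set φ : ℝ → ℝ := fun t => C - (P-1)/(1 - t + t*P) + (M-1)/(1 - t + t*M) with hφdef
  set φ2 : ℝ → ℝ := fun t => (P-1)^2/(1 - t + t*P)^2 - (M-1)^2/(1 - t + t*M)^2 with hφ2def
  -- positivity of denominators on [0,1]
  have hApos : ∀ t : ℝ, 0 ≤ t → t ≤ 1 → 0 < 1 - t + t*P := fun t h0 h1 =>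
    aff_pos h0 h1 (by linarith)
  have hBpos : ∀ t : ℝ, 0 ≤ t → t ≤ 1 → 0 < 1 - t + t*M := fun t h0 h1 =>
    aff_pos h0 h1 hM0
  -- derivatives
  have hg' : ∀ t : ℝ, 0 ≤ t → t ≤ 1 → HasDerivAt g (φ t) t := by
    intro t h0 h1
    have hA := hApos t h0 h1
    have hB := hBpos t h0 h1
    have dA : HasDerivAt (fun t : ℝ => 1 - t + t*P) (P-1) t := by
      have : HasDerivAt (fun t : ℝ => (1 - t) + t*P) (-1 + 1*P) t :=
        (((hasDerivAt_id t).const_sub 1)).add ((hasDerivAt_id t).mul_const P)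
      simpa using this.congr_deriv (by ring)
    have dB : HasDerivAt (fun t : ℝ => 1 - t + t*M) (M-1) t := by
      have : HasDerivAt (fun t : ℝ => (1 - t) + t*M) (-1 + 1*M) t :=
        (((hasDerivAt_id t).const_sub 1)).add ((hasDerivAt_id t).mul_const M)
      simpa using this.congr_deriv (by ring)
    have d1 : HasDerivAt (fun t : ℝ => Real.log (1 - t + t*P)) ((P-1)/(1 - t + t*P)) t :=
      dA.log hA.ne'
    have d2 : HasDerivAt (fun t : ℝ => Real.log (1 - t + t*M)) ((M-1)/(1 - t + t*M)) t :=
      dB.log hB.ne'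
    have d0 : HasDerivAt (fun t : ℝ => t*C) C t := by simpa using (hasDerivAt_id t).mul_const C
    have := (d0.sub d1).add d2
    exact this
  have hφ' : ∀ t : ℝ, 0 ≤ t → t ≤ 1 → HasDerivAt φ (φ2 t) t := by
    intro t h0 h1
    have hA := hApos t h0 h1
    have hB := hBpos t h0 h1
    have dA : HasDerivAt (fun t : ℝ => 1 - t + t*P) (P-1) t := by
      have : HasDerivAt (fun t : ℝ => (1 - t) + t*P) (-1 + 1*P) t :=
        (((hasDerivAt_id t).const_sub 1)).add ((hasDerivAt_id t).mul_const P)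
      simpa using this.congr_deriv (by ring)
    have dB : HasDerivAt (fun t : ℝ => 1 - t + t*M) (M-1) t := by
      have : HasDerivAt (fun t : ℝ => (1 - t) + t*M) (-1 + 1*M) t :=
        (((hasDerivAt_id t).const_sub 1)).add ((hasDerivAt_id t).mul_const M)
      simpa using this.congr_deriv (by ring)
    have d1 : HasDerivAt (fun t : ℝ => (P-1)/(1 - t + t*P))
        ((0*(1-t+t*P) - (P-1)*(P-1))/(1-t+t*P)^2) t :=
      (hasDerivAt_const t (P-1)).div dA hA.ne'
    have d2 : HasDerivAt (fun t : ℝ => (M-1)/(1 - t + t*M))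
        ((0*(1-t+t*M) - (M-1)*(M-1))/(1-t+t*M)^2) t :=
      (hasDerivAt_const t (M-1)).div dB hB.ne'
    have := ((hasDerivAt_const t C).sub d1).add d2
    have heq : 0 - (0*(1-t+t*P) - (P-1)*(P-1))/(1-t+t*P)^2
        + (0*(1-t+t*M) - (M-1)*(M-1))/(1-t+t*M)^2 = φ2 t := by
      rw [hφ2def]
      field_simp
      ring
    rw [heq] at this
    exact this
  -- g 0 = 0 and g 1 = 0
  have hg0 : g 0 = 0 := by simp [hgdef]
  have hg1 : g 1 = 0 := by
    have e1 : (1:ℝ) - 1 + 1*P = P := by ring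
    have e2 : (1:ℝ) - 1 + 1*M = M := by ring
    simp only [hgdef, e1, e2, hCdef]; ring
  -- φ 0 ≥ 0
  have hφ0 : 0 ≤ φ 0 := by
    have e : φ 0 = C - (P-1) + (M-1) := by
      simp [hφdef]
    rw [e, hCdef]; linarith [hClb]
  -- threshold
  set r : ℝ := (P+M-2)/(2*(P-1)*(1-M)) with hrdef
  have hden : 0 < 2*(P-1)*(1-M) := by nlinarith
  have hr0 : 0 < r := by
    rw [hrdef]; apply div_pos; nlinarith; exact hden
  -- sign of φ2
  have hsign : ∀ t : ℝ, 0 ≤ t → t ≤ 1 →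
      ((t ≤ r → 0 ≤ φ2 t) ∧ (r ≤ t → φ2 t ≤ 0)) := by
    intro t h0 h1
    have hA := hApos t h0 h1
    have hB := hBpos t h0 h1
    have hkey : (P-1)*(1-t+t*M) - (1-M)*(1-t+t*P) = (P+M-2) - t*(2*(P-1)*(1-M)) := by ring
    constructor
    · intro htr
      have h5 : (1-M)*(1-t+t*P) ≤ (P-1)*(1-t+t*M) := by
        have htd : t*(2*(P-1)*(1-M)) ≤ P+M-2 := by
          have := mul_le_mul_of_nonneg_right htr hden.le
          rw [hrdef, div_mul_cancel₀ _ hden.ne'] at this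
          linarith
        linarith [hkey, htd]
      rw [hφ2def]
      rw [sub_nonneg, div_le_div_iff₀ (pow_pos hB 2) (pow_pos hA 2)]
      have h6 : 0 ≤ (1-M)*(1-t+t*P) := mul_nonneg (by linarith) hA.le
      nlinarith [h5, h6]
    · intro htr
      have h5 : (P-1)*(1-t+t*M) ≤ (1-M)*(1-t+t*P) := by
        have htd : P+M-2 ≤ t*(2*(P-1)*(1-M)) := by
          have := mul_le_mul_of_nonneg_right htr hden.le
          rw [hrdef, div_mul_cancel₀ _ hden.ne'] at this
          linarith
        linarith [hkey, htd]
      rw [hφ2def]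
      rw [sub_nonpos, div_le_div_iff₀ (pow_pos hA 2) (pow_pos hB 2)]
      have h6 : 0 ≤ (P-1)*(1-t+t*M) := mul_nonneg (by linarith) hB.le
      nlinarith [h5, h6]
  -- monotone lemma: g nonneg on [0, min l r]
  have hgnonneg : ∀ s : ℝ, 0 ≤ s → s ≤ 1 → s ≤ r → 0 ≤ g s := by
    intro s hs0 hs1 hsr
    -- φ monotone on [0,s], so φ ≥ φ 0 ≥ 0 there; then g monotone on [0,s]
    have hφmono : MonotoneOn φ (Set.Icc 0 s) := by
      apply monotoneOn_of_hasDerivWithinAt_nonneg (convex_Icc 0 s)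
        (fun t ht => (hφ' t ht.1 (ht.2.trans hs1)).continuousAt.continuousWithinAt)
        (fun t ht => (hφ' t (interior_subset ht).1
          ((interior_subset ht).2.trans hs1)).hasDerivWithinAt)
      intro t ht
      rw [interior_Icc] at ht
      exact ((hsign t ht.1.le (ht.2.le.trans hs1)).1 (ht.2.le.trans hsr))
    have hφnn : ∀ t ∈ Set.Icc (0:ℝ) s, 0 ≤ φ t := by
      intro t ht
      have := hφmono (Set.left_mem_Icc.2 hs0) ht ht.1
      linarith [hφ0]
    have hgmono : MonotoneOn g (Set.Icc 0 s) := by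
      apply monotoneOn_of_hasDerivWithinAt_nonneg (convex_Icc 0 s)
        (fun t ht => (hg' t ht.1 (ht.2.trans hs1)).continuousAt.continuousWithinAt)
        (fun t ht => (hg' t (interior_subset ht).1
          ((interior_subset ht).2.trans hs1)).hasDerivWithinAt)
      intro t ht
      rw [interior_Icc] at ht
      exact hφnn t ⟨ht.1.le, ht.2.le⟩
    have := hgmono (Set.left_mem_Icc.2 hs0) (Set.right_mem_Icc.2 hs0) hs0
    rw [hg0] at this
    exact this
  -- main goal: 0 ≤ g l
  have hmain : 0 ≤ g l := by
    rcases le_or_gt l r with hlr | hlr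
    · exact hgnonneg l hl0 hl1 hlr
    · -- r < l ≤ 1; concavity on [r,1]
      have hr1 : r < 1 := hlr.trans_le hl1
      have hgr : 0 ≤ g r := hgnonneg r hr0.le hr1.le (le_refl r)
      have hconc : ConcaveOn ℝ (Set.Icc r 1) g := by
        apply concaveOn_of_hasDerivWithinAt2_nonpos (convex_Icc r 1)
          (f' := φ) (f'' := φ2)
          (fun t ht => (hg' t (hr0.le.trans ht.1) ht.2).continuousAt.continuousWithinAt)
          (fun t ht => (hg' t (hr0.le.trans (interior_subset ht).1)
            (interior_subset ht).2).hasDerivWithinAt)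
          (fun t ht => (hφ' t (hr0.le.trans (interior_subset ht).1)
            (interior_subset ht).2).hasDerivWithinAt)
        intro t ht
        rw [interior_Icc] at ht
        exact (hsign t (hr0.le.trans ht.1.le) ht.2.le).2 ht.1.le
      rcases eq_or_lt_of_le hl1 with hl1' | hl1'
      · rw [hl1', hg1]
      · have h1r : 0 < 1 - r := by linarith
        set a : ℝ := (1-l)/(1-r) with hadef
        set b : ℝ := (l-r)/(1-r) with hbdef
        have ha0 : 0 ≤ a := by apply div_nonneg <;> linarith
        have hb0 : 0 ≤ b := by apply div_nonneg <;> linarith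
        have hab : a + b = 1 := by rw [hadef, hbdef]; field_simp; ring
        have hcomb : a • r + b • (1:ℝ) = l := by
          simp only [smul_eq_mul, hadef, hbdef]; field_simp; ring
        have := hconc.2 (Set.left_mem_Icc.2 hr1.le) (Set.right_mem_Icc.2 hr1.le) ha0 hb0 hab
        rw [hcomb, hg1] at this
        simp only [smul_eq_mul] at this
        nlinarith [mul_nonneg ha0 hgr]
  -- convert to psi
  have e1 : psi l M - psi l P = g l := by
    simp only [psi, hgdef, hCdef]; ring
  linarith [hmain, e1]

lemma key2 {l σ : ℝ} (hl0 : 0 ≤ l) (hl1 : l ≤ 1) (hσ0 : 0 < σ) (hσ1 : σ < 1) :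
    psi l ((1+σ)^3) ≤ psi l ((1-σ)^3) := by
  have h1σ : (0:ℝ) < 1 + σ := by linarith
  have h1σm : (0:ℝ) < 1 - σ := by linarith
  apply key2'  hl0 hl1 (by positivity)
  · nlinarith [pow_lt_one₀ h1σm.le (by linarith : 1 - σ < 1) (by norm_num : 3 ≠ 0)]
  · nlinarith [one_lt_pow₀ (by linarith : 1 < 1 + σ) (by norm_num : 3 ≠ 0)]
  · nlinarith [sq_nonneg σ, hσ0]
  · have h3 : Real.log ((1+σ)^3) - Real.log ((1-σ)^3)
        = 3*(Real.log (1+σ) - Real.log (1-σ)) := by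
      rw [Real.log_pow, Real.log_pow]; push_cast; ring
    have h4 := two_mul_le_log hσ0.le hσ1
    have h5 : (1+σ)^3 - (1-σ)^3 = 6*σ + 2*σ^3 := by ring
    rw [h3, h5]; linarith

lemma master {l P M σ : ℝ} (hl0 : 0 ≤ l) (hl1 : l ≤ 1) (hM : 0 < M) (hMP : M ≤ P)
    (hPσ : P ≤ (1+σ)^3) (hMσ : M ≤ (1-σ)^3) (hσ1 : σ < 1) : psi l P ≤ psi l M := by
  have hP : 0 < P := lt_of_lt_of_le hM hMP
  have h1σ : 0 < 1 + σ := by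
    by_contra h
    push_neg at h
    have h2 : (1+σ)^3 = (1+σ)*(1+σ)^2 := by ring
    nlinarith [sq_nonneg (1+σ)]
  have h1σm : 0 < 1 - σ := by linarith
  rcases le_or_gt σ 0 with hσ | hσ
  · have hP1 : P ≤ 1 := hPσ.trans (pow_le_one₀ h1σ.le (by linarith))
    exact psi_anti hl0 hl1 hM hMP hP1
  · rcases le_or_gt P 1 with hP1 | hP1
    · exact psi_anti hl0 hl1 hM hMP hP1
    · have hm1 : (1-σ)^3 ≤ 1 := pow_le_one₀ h1σm.le (by linarith)
      calc psi l P ≤ psi l ((1+σ)^3) := psi_mono hl0 hl1 hP1.le hPσ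
        _ ≤ psi l ((1-σ)^3) := key2 hl0 hl1 hσ hσ1
        _ ≤ psi l M := psi_anti hl0 hl1 hM hMσ hm1

lemma arctanh_neg {x : ℝ} : arctanh (-x) = - arctanh x := by
  unfold arctanh
  have e : (1 + -x)/(1 - -x) = ((1+x)/(1-x))⁻¹ := by
    rw [inv_div]; ring_nf
  rw [e, Real.log_inv]; ring

lemma pp {l a b c : ℝ} (hl0 : 0 ≤ l) (hl1 : l ≤ 1)
    (ha : -1 < a) (ha' : a < 1) (hb : -1 < b) (hb' : b < 1) (hc : -1 < c) (hc' : c < 1) :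
    G l a b c ≤ l * ((a + b + c + a*b*c) * (arctanh a + arctanh b + arctanh c)) := by
  have h1a : (0:ℝ) < 1 + a := by linarith
  have h1a' : (0:ℝ) < 1 - a := by linarith
  have h1b : (0:ℝ) < 1 + b := by linarith
  have h1b' : (0:ℝ) < 1 - b := by linarith
  have h1c : (0:ℝ) < 1 + c := by linarith
  have h1c' : (0:ℝ) < 1 - c := by linarith
  set P : ℝ := (1+a)*(1+b)*(1+c) with hPdef
  set M : ℝ := (1-a)*(1-b)*(1-c) with hMdef
  have hP0 : 0 < P := by positivity
  have hM0 : 0 < M := by positivity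
  set s : ℝ := a + b + c + a*b*c with hsdef
  have hs2 : 2*s = P - M := by rw [hsdef, hPdef, hMdef]; ring
  have hD0 : 0 < 1 + l*(a*b + b*c + c*a) := by
    have e : 1 + l*(a*b + b*c + c*a) = (1-l) + l*((P+M)/2) := by
      rw [hPdef, hMdef]; ring
    rw [e]
    have := aff_pos hl0 hl1 (by positivity : (0:ℝ) < (P+M)/2)
    linarith [this]
  have hA : 0 < 1 - l + l*P := aff_pos hl0 hl1 hP0
  have hB : 0 < 1 - l + l*M := aff_pos hl0 hl1 hM0
  -- rewrite the arctanh argument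
  have hnum : 1 + l*s/(1 + l*(a*b + b*c + c*a)) = (1 - l + l*P)/(1 + l*(a*b + b*c + c*a)) := by
    rw [eq_div_iff hD0.ne', add_mul, div_mul_cancel₀ _ hD0.ne']
    rw [hsdef, hPdef]; ring
  have hden2 : 1 - l*s/(1 + l*(a*b + b*c + c*a)) = (1 - l + l*M)/(1 + l*(a*b + b*c + c*a)) := by
    rw [eq_div_iff hD0.ne', sub_mul, div_mul_cancel₀ _ hD0.ne']
    rw [hsdef, hMdef]; ring
  have harg : (1 + l*s/(1 + l*(a*b + b*c + c*a))) / (1 - l*s/(1 + l*(a*b + b*c + c*a)))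
      = (1 - l + l*P)/(1 - l + l*M) := by
    rw [hnum, hden2, div_div_div_comm, div_self hD0.ne', div_one]
  have hG : G l a b c = s * ((1/2) * (Real.log (1 - l + l*P) - Real.log (1 - l + l*M))) := by
    unfold G arctanh
    rw [← hsdef]
    rw [harg, Real.log_div hA.ne' hB.ne']
  have hsum : arctanh a + arctanh b + arctanh c = (1/2) * (Real.log P - Real.log M) := by
    unfold arctanh
    rw [hPdef, hMdef, Real.log_mul (by positivity) h1c.ne', Real.log_mul h1a.ne' h1b.ne',
      Real.log_mul (by positivity) h1c'.ne', Real.log_mul h1a'.ne' h1b'.ne',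
      Real.log_div h1a.ne' h1a'.ne', Real.log_div h1b.ne' h1b'.ne',
      Real.log_div h1c.ne' h1c'.ne']
    ring
  rw [hG, hsum]
  set σ : ℝ := (a+b+c)/3 with hσdef
  have hσ1 : σ < 1 := by rw [hσdef]; linarith
  have hσ1' : -1 < σ := by rw [hσdef]; linarith
  have hPσ : P ≤ (1+σ)^3 := by
    have := amgm3 h1a.le h1b.le h1c.le
    have e : ((1+a) + (1+b) + (1+c))/3 = 1 + σ := by rw [hσdef]; ring
    rw [e] at this
    exact this
  have hMσ : M ≤ (1-σ)^3 := by
    have := amgm3 h1a'.le h1b'.le h1c'.le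
    have e : ((1-a) + (1-b) + (1-c))/3 = 1 - σ := by rw [hσdef]; ring
    rw [e] at this
    exact this
  clear_value P M s σ
  clear hnum hden2 harg hG hsum
  rcases le_total M P with hMP | hMP
  · have hψ : psi l P ≤ psi l M := master hl0 hl1 hM0 hMP hPσ hMσ hσ1
    have hψ' : Real.log (1 - l + l*P) - Real.log (1 - l + l*M)
        ≤ l * (Real.log P - Real.log M) := by
      simp only [psi] at hψ; linarith
    have hs0 : 0 ≤ s := by linarith [hs2]
    nlinarith [mul_le_mul_of_nonneg_left hψ' hs0]
  · have hψ : psi l M ≤ psi l P := by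
      apply master hl0 hl1 hP0 hMP (σ := -σ)
      · have e : (1 + -σ)^3 = (1-σ)^3 := by ring
        rw [e]; exact hMσ
      · have e : (1 - -σ)^3 = (1+σ)^3 := by ring
        rw [e]; exact hPσ
      · linarith
    have hψ' : l * (Real.log P - Real.log M)
        ≤ Real.log (1 - l + l*P) - Real.log (1 - l + l*M) := by
      simp only [psi] at hψ; linarith
    have hs0 : s ≤ 0 := by linarith [hs2]
    nlinarith [mul_le_mul_of_nonpos_left hψ' hs0]

theorem stmt_8 (l t1 t2 t3 : ℝ) (hl : l ∈ Set.Icc (0:ℝ) 1)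
    (h1 : t1 ∈ Set.Icc (0:ℝ) 1) (h2 : t2 ∈ Set.Icc (0:ℝ) 1) (h3 : t3 ∈ Set.Icc (0:ℝ) 1)
    (h1' : t1 < 1) (h2' : t2 < 1) (h3' : t3 < 1) :
    (1/4) * (G l t1 t2 t3 + G l t1 (-t2) t3 + G l t1 t2 (-t3) + G l t1 (-t2) (-t3))
      ≤ l * (t1 * arctanh t1 + t2 * arctanh t2 + t3 * arctanh t3) := by
  obtain ⟨hl0, hl1⟩ := hl
  obtain ⟨h10, _⟩ := h1
  obtain ⟨h20, _⟩ := h2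
  obtain ⟨h30, _⟩ := h3
  have m1 : -1 < t1 := by linarith
  have m2 : -1 < t2 := by linarith
  have m3 : -1 < t3 := by linarith
  have A1 := pp hl0 hl1 m1 h1' m2 h2' m3 h3'
  have A2 := pp hl0 hl1 m1 h1' (by linarith : -1 < -t2) (by linarith : -t2 < 1) m3 h3'
  have A3 := pp hl0 hl1 m1 h1' m2 h2' (by linarith : -1 < -t3) (by linarith : -t3 < 1)
  have A4 := pp hl0 hl1 m1 h1' (by linarith : -1 < -t2) (by linarith : -t2 < 1)
    (by linarith : -1 < -t3) (by linarith : -t3 < 1)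
  rw [arctanh_neg] at A2 A3 A4
  rw [arctanh_neg] at A4
  set X := arctanh t1
  set Y := arctanh t2
  set Z := arctanh t3
  have E : l * ((t1 + t2 + t3 + t1*t2*t3) * (X + Y + Z))
      + l * ((t1 + -t2 + t3 + t1*(-t2)*t3) * (X + -Y + Z))
      + l * ((t1 + t2 + -t3 + t1*t2*(-t3)) * (X + Y + -Z))
      + l * ((t1 + -t2 + -t3 + t1*(-t2)*(-t3)) * (X + -Y + -Z))
      = 4 * (l * (t1 * X + t2 * Y + t3 * Z)) := by ring
  linarith [A1, A2, A3, A4, E]
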